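/- For all positive integers n and k with 1 ≤ k ≤ n and real α ∈ (0,1), the generalized Stirling number S_α(n,k) := (1/(α^k k!)) ∑_{j=1}^{k} (-1)^j C(k,j) (-jα)_n is strictly positive, where (x)_n = x(x+1)⋯(x+n-1) is the Pochhammer symbol. -/

import Mathlib

open Finset

/-- Rising factorial (Pochhammer symbol) `(x)_n = x(x+1)⋯(x+n-1)`. -/
noncomputable def risingFactorial (x : ℝ) (n : ℕ) : ℝ :=
  ∏ i ∈ Finset.range n, (x + i)

/-- Generalized Stirling number of the second kind
`S_α(n,k) = (1/(α^k k!)) ∑_{j=1}^k (-1)^j C(k,j) (-jα)_n`. -/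
noncomputable def genStirling (α : ℝ) (n k : ℕ) : ℝ :=
  (1 / (α ^ k * (Nat.factorial k : ℝ))) *
    ∑ j ∈ Finset.Icc 1 k, (-1 : ℝ) ^ j * (Nat.choose k j : ℝ) *
      risingFactorial (-(j * α)) n

noncomputable def TT (α : ℝ) (n k : ℕ) : ℝ :=
  ∑ i ∈ Finset.range k, (-1 : ℝ) ^ (i + 1) * (Nat.choose k (i + 1) : ℝ) *
    risingFactorial (-(((i + 1 : ℕ) : ℝ) * α)) n

lemma rf_succ (x : ℝ) (n : ℕ) :
    risingFactorial x (n + 1) = risingFactorial x n * (x + n) := by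
  simp [risingFactorial, Finset.prod_range_succ]

lemma rf_zero (x : ℝ) : risingFactorial x 0 = 1 := by simp [risingFactorial]

lemma T_eq (α : ℝ) (n k : ℕ) :
    (∑ j ∈ Finset.Icc 1 k, (-1 : ℝ) ^ j * (Nat.choose k j : ℝ) *
      risingFactorial (-(j * α)) n) = TT α n k := by
  rw [← Finset.Ico_add_one_right_eq_Icc, Finset.sum_Ico_eq_sum_range, Nat.add_sub_cancel]
  refine Finset.sum_congr rfl fun i _ => ?_
  rw [add_comm 1 i]

lemma choose_id (m i : ℕ) :
    ((m : ℝ) - i) * (Nat.choose (m + 1) (i + 1) : ℝ)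
      = ((m : ℝ) + 1) * (Nat.choose m (i + 1) : ℝ) := by
  rcases le_or_gt i m with h | h
  · have pascal : (Nat.choose (m + 1) (i + 1) : ℝ)
        = (Nat.choose m i : ℝ) + (Nat.choose m (i + 1) : ℝ) := by
      rw [Nat.choose_succ_succ]; push_cast; ring
    have e1 : (Nat.choose m (i + 1) : ℝ) * ((i : ℝ) + 1)
        = (Nat.choose m i : ℝ) * ((m : ℝ) - (i : ℝ)) := by
      have := congrArg (Nat.cast : ℕ → ℝ) (Nat.choose_succ_right_eq m i)
      push_cast [Nat.cast_sub h] at this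
      linarith [this]
    linear_combination ((m : ℝ) - (i : ℝ)) * pascal - e1
  · rw [Nat.choose_eq_zero_of_lt (by omega), Nat.choose_eq_zero_of_lt (by omega)]
    ring

lemma T_rec (α : ℝ) (n m : ℕ) :
    TT α (n + 1) (m + 1)
      = α * ((m : ℝ) + 1) * TT α n m
        + ((n : ℝ) - ((m : ℝ) + 1) * α) * TT α n (m + 1) := by
  have h1 : TT α (n + 1) (m + 1)
      = ((n : ℝ) - ((m : ℝ) + 1) * α) * TT α n (m + 1)
        + α * ∑ i ∈ Finset.range (m + 1),
            (-1 : ℝ) ^ (i + 1) * (((m : ℝ) - i) * (Nat.choose (m + 1) (i + 1) : ℝ)) *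
              risingFactorial (-(((i + 1 : ℕ) : ℝ) * α)) n := by
    unfold TT
    rw [Finset.mul_sum, Finset.mul_sum, ← Finset.sum_add_distrib]
    refine Finset.sum_congr rfl fun i _ => ?_
    rw [rf_succ]
    push_cast
    ring
  have h2 : ∑ i ∈ Finset.range (m + 1),
        (-1 : ℝ) ^ (i + 1) * (((m : ℝ) - i) * (Nat.choose (m + 1) (i + 1) : ℝ)) *
          risingFactorial (-(((i + 1 : ℕ) : ℝ) * α)) n
      = ((m : ℝ) + 1) * TT α n m := by
    have h3 : ∑ i ∈ Finset.range (m + 1),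
          (-1 : ℝ) ^ (i + 1) * (((m : ℝ) - i) * (Nat.choose (m + 1) (i + 1) : ℝ)) *
            risingFactorial (-(((i + 1 : ℕ) : ℝ) * α)) n
        = ∑ i ∈ Finset.range (m + 1),
            ((m : ℝ) + 1) * ((-1 : ℝ) ^ (i + 1) * (Nat.choose m (i + 1) : ℝ) *
              risingFactorial (-(((i + 1 : ℕ) : ℝ) * α)) n) := by
      refine Finset.sum_congr rfl fun i _ => ?_
      have := choose_id m i
      linear_combination ((-1 : ℝ) ^ (i + 1) *
        risingFactorial (-(((i + 1 : ℕ) : ℝ) * α)) n) * this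
    rw [h3, ← Finset.mul_sum, Finset.sum_range_succ,
      Nat.choose_eq_zero_of_lt (by omega : m < m + 1)]
    simp [TT]
  rw [h1, h2]
  ring

lemma T_zero_n (α : ℝ) (k : ℕ) (hk : 1 ≤ k) : TT α 0 k = -1 := by
  have h : ∑ j ∈ Finset.range (k + 1), (-1 : ℝ) ^ j * (Nat.choose k j : ℝ) = 0 := by
    have := @Int.alternating_sum_range_choose k
    rw [if_neg (by omega)] at this
    have := congrArg (Int.cast : ℤ → ℝ) this
    push_cast at this
    simpa using this
  rw [Finset.sum_range_succ'] at h
  simp only [pow_zero, Nat.choose_zero_right, Nat.cast_one, one_mul, mul_one] at h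
  have : TT α 0 k = ∑ i ∈ Finset.range k, (-1 : ℝ) ^ (i + 1) * (Nat.choose k (i + 1) : ℝ) := by
    unfold TT
    refine Finset.sum_congr rfl fun i _ => by rw [rf_zero, mul_one]
  rw [this]
  linarith [h]

lemma T_zero (α : ℝ) : ∀ n k : ℕ, 1 ≤ n → n < k → TT α n k = 0 := by
  intro n
  induction n with
  | zero => intro k h; omega
  | succ n ih =>
    intro k _ hnk
    obtain ⟨m, rfl⟩ : ∃ m, k = m + 1 := ⟨k - 1, by omega⟩
    rw [T_rec]
    rcases Nat.eq_zero_or_pos n with rfl | hn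
    · -- n = 0 : k = m+1 with m ≥ 1
      rw [T_zero_n α m (by omega), T_zero_n α (m + 1) (by omega)]
      push_cast
      ring
    · rw [ih m hn (by omega), ih (m + 1) hn (by omega)]
      ring

lemma T_pos (α : ℝ) (hα : α ∈ Set.Ioo (0 : ℝ) 1) :
    ∀ n k : ℕ, 1 ≤ k → k ≤ n → 0 < TT α n k := by
  obtain ⟨hα0, hα1⟩ := hα
  intro n
  induction n with
  | zero => intro k h1 h2; omega
  | succ n ih =>
    intro k hk1 hkn
    obtain ⟨m, rfl⟩ : ∃ m, k = m + 1 := ⟨k - 1, by omega⟩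
    rw [T_rec]
    rcases Nat.eq_zero_or_pos m with rfl | hm
    · -- k = 1
      have hT0 : TT α n 0 = 0 := by simp [TT]
      rcases Nat.eq_zero_or_pos n with rfl | hn
      · rw [hT0, T_zero_n α 1 le_rfl]
        push_cast
        nlinarith
      · have h1 : 0 < TT α n 1 := ih 1 le_rfl hn
        rw [hT0]
        have hn1 : (1 : ℝ) ≤ (n : ℝ) := by exact_mod_cast hn
        norm_num
        nlinarith [mul_pos (by linarith : (0:ℝ) < (n : ℝ) - α) h1]
    · have h1 : 0 < TT α n m := ih m hm (by omega)
      have hcm : (0 : ℝ) < (m : ℝ) + 1 := by positivity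
      have hfirst : 0 < α * ((m : ℝ) + 1) * TT α n m := by positivity
      have hsecond : 0 ≤ ((n : ℝ) - ((m : ℝ) + 1) * α) * TT α n (m + 1) := by
        rcases Nat.lt_or_ge n (m + 1) with h | h
        · rw [T_zero α n (m + 1) (by omega) h, mul_zero]
        · have h2 : 0 < TT α n (m + 1) := ih (m + 1) (by omega) h
          have hn : ((m : ℝ) + 1) ≤ (n : ℝ) := by exact_mod_cast h
          have : ((m : ℝ) + 1) * α < (m : ℝ) + 1 := by nlinarith
          nlinarith
      linarith

theorem genStirling_pos (n k : ℕ) (hk1 : 1 ≤ k) (hkn : k ≤ n)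
    (α : ℝ) (hα : α ∈ Set.Ioo (0 : ℝ) 1) :
    0 < genStirling α n k := by
  obtain ⟨hα0, hα1⟩ := hα
  unfold genStirling
  rw [T_eq]
  have h1 : 0 < TT α n k := T_pos α ⟨hα0, hα1⟩ n k hk1 hkn
  have h2 : (0 : ℝ) < α ^ k * (Nat.factorial k : ℝ) := by positivity
  positivity
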